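/- Let T be a pure row contraction on an infinite-dimensional Hilbert space H with all defect dimensions Δ_T^n finite. Then the defect dimensions are strictly increasing: Δ_T^m ≠ Δ_T^n whenever m ≠ n. -/

import Mathlib

open ContinuousLinearMap
open scoped InnerProductSpace ComplexConjugate

/-- The completely positive map `Ψ_T(X) = ∑ i, T i X (T i)*` associated to a `d`-tuple. -/
noncomputable def psiMap {H : Type*} [NormedAddCommGroup H] [InnerProductSpace ℂ H]
    [CompleteSpace H] {d : ℕ} (T : Fin d → H →L[ℂ] H) (X : H →L[ℂ] H) : H →L[ℂ] H :=
  ∑ i, T i ∘L X ∘L adjoint (T i)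

/-- The `n`-th defect space: the closure of the range of `I - Ψ_T^n(I)`. -/
noncomputable def defectSpace {H : Type*} [NormedAddCommGroup H] [InnerProductSpace ℂ H]
    [CompleteSpace H] {d : ℕ} (T : Fin d → H →L[ℂ] H) (n : ℕ) : Submodule ℂ H :=
  (LinearMap.range ((1 - (psiMap T)^[n] 1 : H →L[ℂ] H) : H →ₗ[ℂ] H)).topologicalClosure

section Aux
variable {H : Type*} [NormedAddCommGroup H] [InnerProductSpace ℂ H] [CompleteSpace H] {d : ℕ}
  (T : Fin d → H →L[ℂ] H)

lemma psiMap_sub (X Y : H →L[ℂ] H) : psiMap T (X - Y) = psiMap T X - psiMap T Y := by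
  simp [psiMap, comp_sub, sub_comp, Finset.sum_sub_distrib]

lemma psiMap_iterate_sub (n : ℕ) (X Y : H →L[ℂ] H) :
    (psiMap T)^[n] (X - Y) = (psiMap T)^[n] X - (psiMap T)^[n] Y := by
  induction n generalizing X Y with
  | zero => simp
  | succ n ih => simp only [Function.iterate_succ_apply, psiMap_sub, ih]

lemma psiMap_isPositive {X : H →L[ℂ] H} (hX : X.IsPositive) : (psiMap T X).IsPositive :=
  Finset.sum_induction _ _ (fun _ _ ha hb => ha.add hb) isPositive_zero
    (fun i _ => hX.conj_adjoint (T i))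

lemma psiMap_iterate_isPositive {X : H →L[ℂ] H} (hX : X.IsPositive) (n : ℕ) :
    ((psiMap T)^[n] X).IsPositive := by
  induction n with
  | zero => exact hX
  | succ n ih => rw [Function.iterate_succ_apply']; exact psiMap_isPositive T ih

lemma telescope (n : ℕ) :
    (1 : H →L[ℂ] H) - (psiMap T)^[n] 1
      = ∑ k ∈ Finset.range n, (psiMap T)^[k] (1 - psiMap T 1) := by
  induction n with
  | zero => simp
  | succ n ih =>
    rw [Finset.sum_range_succ, ← ih, psiMap_iterate_sub, ← Function.iterate_succ_apply]
    abel

lemma pos_apply_eq_zero {B : H →L[ℂ] H} (hB : B.IsPositive) {x : H}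
    (hx : ⟪B x, x⟫_ℂ = 0) : B x = 0 := by
  have hsym : ∀ u v : H, ⟪B u, v⟫_ℂ = ⟪u, B v⟫_ℂ :=
    isSelfAdjoint_iff_isSymmetric.mp hB.isSelfAdjoint
  suffices h : ∀ z : H, ⟪B x, z⟫_ℂ = 0 by
    have h2 := h (B x)
    rwa [inner_self_eq_zero] at h2
  intro z
  by_contra hw
  set w : ℂ := ⟪B x, z⟫_ℂ with hwdef
  set a : ℝ := Complex.re ⟪B z, z⟫_ℂ with hadef
  have ha : 0 ≤ a := hB.re_inner_nonneg_left z
  set s : ℝ := 1 / (a + 1) with hsdef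
  have hs : 0 < s := by positivity
  set c : ℂ := -(s : ℂ) * conj w with hcdef
  have hBzx : ⟪B z, x⟫_ℂ = conj w := by
    rw [hsym, ← inner_conj_symm]
  have e1 : ⟪B (x + c • z), x + c • z⟫_ℂ
      = c * w + conj (c * w) + conj c * c * ⟪B z, z⟫_ℂ := by
    rw [map_add, map_smul, inner_add_left, inner_add_right, inner_add_right,
      inner_smul_left, inner_smul_right, inner_smul_left, inner_smul_right, hx, hBzx,
      ← hwdef]
    simp only [map_mul, map_neg, Complex.conj_conj, Complex.conj_ofReal]
    ring
  have hN : 0 < Complex.normSq w := Complex.normSq_pos.mpr hw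
  have hcw : (starRingEnd ℂ) w * w = (Complex.normSq w : ℂ) := by
    rw [mul_comm, Complex.mul_conj]
  have hcwN : c * w = -(s : ℂ) * (Complex.normSq w : ℂ) := by
    rw [hcdef, mul_assoc, hcw]
  have hcc : (starRingEnd ℂ) c * c = (Complex.normSq c : ℂ) := by
    rw [mul_comm, Complex.mul_conj]
  have hnsc : Complex.normSq c = s * s * Complex.normSq w := by
    rw [hcdef]
    simp [Complex.normSq_mul, Complex.normSq_conj, Complex.normSq_ofReal]
  have hpos := hB.re_inner_nonneg_left (x + c • z)
  rw [RCLike.re_to_complex, e1, hcwN, hcc, hnsc] at hpos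
  simp only [Complex.add_re, Complex.neg_re, Complex.mul_re, Complex.ofReal_re,
    Complex.ofReal_im, Complex.conj_re, Complex.conj_im, Complex.re_ofReal_mul,
    Complex.neg_im, ← hadef] at hpos
  have hsa : s * a < 1 := by
    rw [hsdef, div_mul_eq_mul_div, one_mul, div_lt_one (by positivity)]
    linarith
  nlinarith [mul_pos hs hN, mul_pos (mul_pos hs hN) hs]

lemma pos_inner_real {B : H →L[ℂ] H} (hB : B.IsPositive) (v : H) :
    ⟪B v, v⟫_ℂ = ((⟪B v, v⟫_ℂ).re : ℂ) := by
  have hsym : ∀ u w : H, ⟪B u, w⟫_ℂ = ⟪u, B w⟫_ℂ :=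
    isSelfAdjoint_iff_isSymmetric.mp hB.isSelfAdjoint
  have h : (starRingEnd ℂ) ⟪B v, v⟫_ℂ = ⟪B v, v⟫_ℂ := by
    rw [inner_conj_symm, hsym]
  exact (Complex.conj_eq_iff_re.mp h).symm

/-- A finite sum of positive operators kills `x` iff each summand kills `x`. -/
lemma sum_pos_apply_eq_zero {ι : Type*} (s : Finset ι) (P : ι → H →L[ℂ] H)
    (hP : ∀ k ∈ s, (P k).IsPositive) (x : H) :
    (∑ k ∈ s, P k) x = 0 ↔ ∀ k ∈ s, P k x = 0 := by
  constructor
  · intro h k hk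
    have h0 : ∑ j ∈ s, ⟪P j x, x⟫_ℂ = 0 := by
      rw [← sum_inner]
      rw [show ∑ j ∈ s, P j x = 0 from (ContinuousLinearMap.sum_apply s P x).symm.trans h]
      simp
    have h0re : ∑ j ∈ s, (⟪P j x, x⟫_ℂ).re = 0 := by
      rw [← Complex.re_sum, h0, Complex.zero_re]
    have hzre : (⟪P k x, x⟫_ℂ).re = 0 :=
      (Finset.sum_eq_zero_iff_of_nonneg
        (fun j hj => (hP j hj).re_inner_nonneg_left x)).mp h0re k hk
    refine pos_apply_eq_zero (hP k hk) ?_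
    rw [pos_inner_real (hP k hk) x, hzre, Complex.ofReal_zero]
  · intro h
    rw [ContinuousLinearMap.sum_apply]
    exact Finset.sum_eq_zero h

lemma psiMap_apply_eq_zero_iff {B : H →L[ℂ] H} (hB : B.IsPositive) (x : H) :
    psiMap T B x = 0 ↔ ∀ i, B (adjoint (T i) x) = 0 := by
  have hterm : ∀ i : Fin d,
      (T i ∘L B ∘L adjoint (T i)).IsPositive := fun i => hB.conj_adjoint (T i)
  rw [psiMap, sum_pos_apply_eq_zero Finset.univ _ (fun i _ => hterm i) x]
  constructor
  · intro h i
    have h1 := h i (Finset.mem_univ i)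
    rw [comp_apply, comp_apply] at h1
    have h2 : ⟪B (adjoint (T i) x), adjoint (T i) x⟫_ℂ = 0 := by
      have h3 : ⟪T i (B (adjoint (T i) x)), x⟫_ℂ = 0 := by rw [h1, inner_zero_left]
      rwa [← adjoint_inner_right] at h3
    exact pos_apply_eq_zero hB h2
  · intro h i _
    rw [comp_apply, comp_apply, h i, map_zero]

variable (hT : ((1 : H →L[ℂ] H) - psiMap T 1).IsPositive)
include hT

lemma defect_op_isPositive (n : ℕ) : ((1 : H →L[ℂ] H) - (psiMap T)^[n] 1).IsPositive := by
  rw [telescope]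
  exact Finset.sum_induction _ _ (fun _ _ ha hb => ha.add hb) isPositive_zero
    (fun k _ => psiMap_iterate_isPositive T hT k)

lemma mem_ker_iff (n : ℕ) (x : H) :
    ((1 : H →L[ℂ] H) - (psiMap T)^[n] 1) x = 0 ↔
      ∀ k < n, ((psiMap T)^[k] ((1 : H →L[ℂ] H) - psiMap T 1)) x = 0 := by
  rw [telescope, sum_pos_apply_eq_zero _ _ (fun k _ => psiMap_iterate_isPositive T hT k) x]
  simp [Finset.mem_range]

omit hT in
lemma orthogonal_range {B : H →L[ℂ] H} (hB : IsSelfAdjoint B) :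
    (LinearMap.range (B : H →ₗ[ℂ] H))ᗮ = LinearMap.ker (B : H →ₗ[ℂ] H) := by
  have hsym : ∀ u v : H, ⟪B u, v⟫_ℂ = ⟪u, B v⟫_ℂ := isSelfAdjoint_iff_isSymmetric.mp hB
  ext x
  simp only [Submodule.mem_orthogonal, LinearMap.mem_ker]
  constructor
  · intro h
    have h2 : ⟪B (B x), x⟫_ℂ = 0 := h (B (B x)) (LinearMap.mem_range_self _ _)
    rw [hsym] at h2
    exact inner_self_eq_zero.mp h2
  · intro h u hu
    obtain ⟨y, rfl⟩ := LinearMap.mem_range.mp hu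
    rw [ContinuousLinearMap.coe_coe] at h; rw [ContinuousLinearMap.coe_coe, hsym, h, inner_zero_right]
end Aux


section Main
variable {H : Type*} [NormedAddCommGroup H] [InnerProductSpace ℂ H] [CompleteSpace H] {d : ℕ}
  (T : Fin d → H →L[ℂ] H) (hT : ((1 : H →L[ℂ] H) - psiMap T 1).IsPositive)
include hT

lemma defect_eq (n : ℕ) :
    defectSpace T n = (LinearMap.ker ((1 - (psiMap T)^[n] 1 : H →L[ℂ] H) : H →ₗ[ℂ] H))ᗮ := by
  rw [defectSpace, ← Submodule.orthogonal_orthogonal_eq_closure,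
    orthogonal_range (defect_op_isPositive T hT n).isSelfAdjoint]

lemma orth_defect (n : ℕ) :
    (defectSpace T n)ᗮ = LinearMap.ker ((1 - (psiMap T)^[n] 1 : H →L[ℂ] H) : H →ₗ[ℂ] H) := by
  rw [defect_eq T hT, Submodule.orthogonal_orthogonal_eq_closure,
    IsClosed.submodule_topologicalClosure_eq (ContinuousLinearMap.isClosed_ker _)]

lemma key_lemma
    (hpure : ∀ x : H,
      Filter.Tendsto (fun n => ((psiMap T)^[n] 1) x) Filter.atTop (nhds 0))
    (hinf : ¬ FiniteDimensional ℂ H)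
    (hfin : ∀ n : ℕ, FiniteDimensional ℂ (defectSpace T n)) :
    ∀ m n : ℕ, m < n →
      Module.finrank ℂ (defectSpace T m) = Module.finrank ℂ (defectSpace T n) → False := by
  intro m n hmn heq
  have hKanti : ∀ {p q : ℕ}, p ≤ q →
      LinearMap.ker ((1 - (psiMap T)^[q] 1 : H →L[ℂ] H) : H →ₗ[ℂ] H)
        ≤ LinearMap.ker ((1 - (psiMap T)^[p] 1 : H →L[ℂ] H) : H →ₗ[ℂ] H) := by
    intro p q hpq x hx
    rw [LinearMap.mem_ker, ContinuousLinearMap.coe_coe, mem_ker_iff T hT] at hx ⊢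
    exact fun k hk => hx k (hk.trans_le hpq)
  haveI := hfin n
  have hle : defectSpace T m ≤ defectSpace T n := by
    rw [defect_eq T hT, defect_eq T hT]
    exact Submodule.orthogonal_le (hKanti hmn.le)
  have hDeq : defectSpace T m = defectSpace T n :=
    Submodule.eq_of_le_of_finrank_eq hle heq
  have hKeq : LinearMap.ker ((1 - (psiMap T)^[m] 1 : H →L[ℂ] H) : H →ₗ[ℂ] H)
      = LinearMap.ker ((1 - (psiMap T)^[n] 1 : H →L[ℂ] H) : H →ₗ[ℂ] H) := by
    rw [← orth_defect T hT, ← orth_defect T hT, hDeq]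
  have hstep : LinearMap.ker ((1 - (psiMap T)^[m] 1 : H →L[ℂ] H) : H →ₗ[ℂ] H)
      ≤ LinearMap.ker ((1 - (psiMap T)^[m + 1] 1 : H →L[ℂ] H) : H →ₗ[ℂ] H) := by
    rw [hKeq]; exact hKanti hmn
  have claim : ∀ k : ℕ, ∀ x ∈ LinearMap.ker ((1 - (psiMap T)^[m] 1 : H →L[ℂ] H) : H →ₗ[ℂ] H),
      ((psiMap T)^[k] ((1 : H →L[ℂ] H) - psiMap T 1)) x = 0 := by
    intro k
    induction k with
    | zero =>
      intro x hx
      have h1 := hstep hx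
      rw [LinearMap.mem_ker, ContinuousLinearMap.coe_coe, mem_ker_iff T hT] at h1
      simpa using h1 0 (Nat.succ_pos m)
    | succ k ih =>
      intro x hx
      rw [Function.iterate_succ_apply',
        psiMap_apply_eq_zero_iff T (psiMap_iterate_isPositive T hT k)]
      intro i
      apply ih
      rw [LinearMap.mem_ker, ContinuousLinearMap.coe_coe, mem_ker_iff T hT]
      intro j hj
      have hx1 := hstep hx
      rw [LinearMap.mem_ker, ContinuousLinearMap.coe_coe, mem_ker_iff T hT] at hx1
      have h2 := hx1 (j + 1) (Nat.succ_lt_succ hj)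
      rw [Function.iterate_succ_apply'] at h2
      exact (psiMap_apply_eq_zero_iff T (psiMap_iterate_isPositive T hT j) x).mp h2 i
  have hKbot : LinearMap.ker ((1 - (psiMap T)^[m] 1 : H →L[ℂ] H) : H →ₗ[ℂ] H) = ⊥ := by
    rw [Submodule.eq_bot_iff]
    intro x hx
    have hfix : ∀ N : ℕ, ((psiMap T)^[N] 1) x = x := by
      intro N
      have h0 : ((1 : H →L[ℂ] H) - (psiMap T)^[N] 1) x = 0 :=
        (mem_ker_iff T hT N x).mpr (fun k _ => claim k x hx)
      rw [ContinuousLinearMap.sub_apply, ContinuousLinearMap.one_apply, sub_eq_zero] at h0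
      exact h0.symm
    have hp := hpure x
    simp only [hfix] at hp
    exact tendsto_const_nhds_iff.mp hp
  have hDtop : defectSpace T m = ⊤ := by
    rw [defect_eq T hT, hKbot, Submodule.bot_orthogonal_eq_top]
  haveI : FiniteDimensional ℂ (⊤ : Submodule ℂ H) := hDtop ▸ hfin m
  exact hinf (Module.Finite.equiv (Submodule.topEquiv (R := ℂ) (M := H)))

end Main

/-- For a pure row contraction on an infinite-dimensional Hilbert space whose defect
dimensions are all finite, the defect dimensions are pairwise distinct. -/
theorem stmt11 {H : Type*} [NormedAddCommGroup H] [InnerProductSpace ℂ H] [CompleteSpace H]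
    {d : ℕ} (T : Fin d → H →L[ℂ] H)
    (hT : (1 - psiMap T 1).IsPositive)
    (hpure : ∀ x : H,
      Filter.Tendsto (fun n => ((psiMap T)^[n] 1) x) Filter.atTop (nhds 0))
    (hinf : ¬ FiniteDimensional ℂ H)
    (hfin : ∀ n : ℕ, FiniteDimensional ℂ (defectSpace T n)) :
    ∀ m n : ℕ, m ≠ n →
      Module.finrank ℂ (defectSpace T m) ≠ Module.finrank ℂ (defectSpace T n) := by
  intro m n hmn heq
  rcases lt_or_gt_of_ne hmn with h | h
  · exact key_lemma T hT hpure hinf hfin m n h heq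
  · exact key_lemma T hT hpure hinf hfin n m h heq.symm
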